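/- For every directed multigraph D on vertex set [n] and every vertex i ∈ [n], the determinant of the matrix K_{\bar{i}}(D), obtained from the symbolic Kirchhoff matrix K(D) by deleting its i-th row and i-th column, equals the sum over all out-branchings B of D rooted at i of the products ∏_{jk ∈ A(B)} x_{jk}. -/

import Mathlib

open MvPolynomial

/-- `B` is an out-branching rooted at `r` of the directed multigraph with arcs `E`
(given by source and target maps): no arc of `B` enters `r`, every other vertex has exactly
one arc of `B` entering it, and every vertex is reachable from `r` along arcs of `B`. -/
def IsOutBranchingAt {n : ℕ} {E : Type} (src tgt : E → Fin n) (B : Finset E)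
    (r : Fin n) : Prop :=
  (∀ e ∈ B, tgt e ≠ r) ∧
  (∀ v : Fin n, v ≠ r → ∃! e : E, e ∈ B ∧ tgt e = v) ∧
  (∀ v : Fin n, Relation.ReflTransGen (fun a b => ∃ e ∈ B, src e = a ∧ tgt e = b) r v)

namespace MTTaux

open Matrix

variable {n : ℕ}

/-- Iterate a partial map `k` times starting from `w`. -/
def iter (g : Fin n → Option (Fin n)) (k : ℕ) (w : Fin n) : Option (Fin n) :=
  (fun o => Option.bind o g)^[k] (some w)

lemma iter_zero (g : Fin n → Option (Fin n)) (w : Fin n) : iter g 0 w = some w := rfl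

lemma step_none (g : Fin n → Option (Fin n)) (k : ℕ) :
    (fun o => Option.bind o g)^[k] (none : Option (Fin n)) = none := by
  induction k with
  | zero => rfl
  | succ k ih => rw [Function.iterate_succ_apply]; exact ih

lemma iter_add (g : Fin n → Option (Fin n)) (j k : ℕ) (w : Fin n) :
    iter g (j + k) w = (iter g j w).elim none (iter g k) := by
  rcases h : iter g j w with _ | v
  · simp only [Option.elim]
    unfold iter at *
    rw [add_comm, Function.iterate_add_apply, h, step_none]
  · simp only [Option.elim]
    unfold iter at *
    rw [add_comm, Function.iterate_add_apply, h]

lemma iter_one (g : Fin n → Option (Fin n)) (w : Fin n) : iter g 1 w = g w := by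
  unfold iter
  simp

lemma iter_succ' (g : Fin n → Option (Fin n)) (k : ℕ) (w : Fin n) :
    iter g (1 + k) w = (g w).elim none (iter g k) := by
  rw [iter_add, iter_one]

lemma iter_none_mono {g : Fin n → Option (Fin n)} {w : Fin n} {j m : ℕ}
    (h : iter g j w = none) (hjm : j ≤ m) : iter g m w = none := by
  have h2 := iter_add g j (m - j) w
  rw [h] at h2
  rw [show j + (m - j) = m by omega] at h2
  simpa using h2

lemma iter_mul {g : Fin n → Option (Fin n)} {w : Fin n} {k : ℕ}
    (hc : iter g k w = some w) (q : ℕ) : iter g (q * k) w = some w := by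
  induction q with
  | zero => simp [iter_zero]
  | succ q ih =>
    rw [Nat.succ_mul, iter_add, ih]
    exact hc

/-- `g` has no periodic points. -/
def Acyclic (g : Fin n → Option (Fin n)) : Prop :=
  ∀ w k, 0 < k → iter g k w ≠ some w

lemma acyclic_terminates {g : Fin n → Option (Fin n)} (hg : Acyclic g) (w : Fin n) :
    ∃ j, iter g j w = none := by
  by_contra hc
  push_neg at hc
  have hv : ∀ j : ℕ, ∃ v, iter g j w = some v := fun j => Option.ne_none_iff_exists'.mp (hc j)
  set v : ℕ → Fin n := fun j => (hv j).choose with hvdef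
  have hvs : ∀ j, iter g j w = some (v j) := fun j => (hv j).choose_spec
  have hcard : Fintype.card (Fin n) < Fintype.card (Fin (n + 1)) := by simp
  obtain ⟨a, b, hab, heq⟩ := Fintype.exists_ne_map_eq_of_card_lt
    (fun j : Fin (n + 1) => v (j : ℕ)) hcard
  have habv : (a : ℕ) ≠ (b : ℕ) := fun h => hab (Fin.ext h)
  wlog hlt : (a : ℕ) < (b : ℕ) generalizing a b
  · exact this b a hab.symm heq.symm (fun h => hab (Fin.ext h.symm)) (by omega)
  have : iter g ((b : ℕ) - (a : ℕ)) (v a) = some (v (b : ℕ)) := by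
    have := iter_add g (a : ℕ) ((b : ℕ) - (a : ℕ)) w
    rw [show (a : ℕ) + ((b : ℕ) - (a : ℕ)) = (b : ℕ) by omega, hvs, hvs] at this
    simpa using this.symm
  exact hg (v (a : ℕ)) ((b : ℕ) - (a : ℕ)) (by omega) (by rw [this, ← heq])

/-- Depth of a vertex: number of steps until the iteration dies. -/
noncomputable def depth {g : Fin n → Option (Fin n)} (hg : Acyclic g) (w : Fin n) : ℕ :=
  Nat.find (acyclic_terminates hg w)

lemma depth_lt {g : Fin n → Option (Fin n)} (hg : Acyclic g) {w w' : Fin n}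
    (h : g w = some w') : depth hg w' < depth hg w := by
  have h0 : iter g (depth hg w) w = none := Nat.find_spec (acyclic_terminates hg w)
  have hne : depth hg w ≠ 0 := by
    intro h'
    rw [h', iter_zero] at h0
    exact Option.some_ne_none w h0
  obtain ⟨m, hm⟩ : ∃ m, depth hg w = 1 + m := ⟨depth hg w - 1, by omega⟩
  rw [hm, iter_succ', h] at h0
  have : depth hg w' ≤ m := Nat.find_le h0
  omega

/-- The `{0, ±1}` matrix whose row `w` has a `1` in column `w` and a `-1` in
column `g w` (if any). -/
def NM (g : Fin n → Option (Fin n)) : Matrix (Fin n) (Fin n) ℤ :=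
  Matrix.of fun w a => (if a = w then 1 else 0) - (if g w = some a then 1 else 0)

lemma NM_apply (g : Fin n → Option (Fin n)) (w a : Fin n) :
    NM g w a = (if a = w then 1 else 0) - (if g w = some a then 1 else 0) := rfl

lemma det_NM_acyclic {g : Fin n → Option (Fin n)} (hg : Acyclic g) : (NM g).det = 1 := by
  rw [← Matrix.det_transpose]
  have hbt : (NM g)ᵀ.BlockTriangular (depth hg) := by
    intro a w hlt
    rw [Matrix.transpose_apply, NM_apply]
    rw [if_neg, if_neg, sub_zero]
    · intro h
      exact absurd (depth_lt hg h) (by omega)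
    · rintro rfl
      exact lt_irrefl _ hlt
  rw [hbt.det]
  refine Finset.prod_eq_one fun k _ => ?_
  have : ((NM g)ᵀ.toSquareBlock (depth hg) k) = 1 := by
    ext a w
    simp only [Matrix.toSquareBlock_def, Matrix.of_apply, Matrix.transpose_apply, NM_apply,
      Matrix.one_apply]
    by_cases h : a = w
    · subst h
      rw [if_pos rfl, if_pos rfl, if_neg, sub_zero]
      intro hgw
      exact absurd (depth_lt hg hgw) (lt_irrefl _)
    · rw [if_neg h, if_neg (fun he => h (Subtype.ext he)), if_neg, sub_zero]
      intro hgw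
      have := depth_lt hg hgw
      rw [a.2, w.2] at this
      exact lt_irrefl _ this
  rw [this, Matrix.det_one]

lemma det_NM_cyclic {g : Fin n → Option (Fin n)} {w0 : Fin n} {k : ℕ} (hk : 0 < k)
    (hc : iter g k w0 = some w0) : (NM g).det = 0 := by
  classical
  -- all iterates from `w0` exist
  have hmul : ∀ q : ℕ, iter g (q * k) w0 = some w0 := iter_mul hc
  have hall : ∀ j : ℕ, ∃ u, iter g j w0 = some u := by
    intro j
    rcases h : iter g j w0 with _ | u
    · exfalso
      have h2 := iter_none_mono h (Nat.le_mul_of_pos_right j hk)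
      rw [hmul j] at h2
      exact Option.some_ne_none w0 h2
    · exact ⟨u, rfl⟩
  set v : ℕ → Fin n := fun j => (hall j).choose with hvdef
  have hvs : ∀ j, iter g j w0 = some (v j) := fun j => (hall j).choose_spec
  have hshift : ∀ m j, iter g j (v m) = some (v (m + j)) := by
    intro m j
    have := iter_add g m j w0
    rw [hvs m, hvs (m + j)] at this
    exact this.symm
  have hgv : ∀ m, g (v m) = some (v (m + 1)) := by
    intro m
    rw [← iter_one g (v m)]
    exact hshift m 1
  have hper : ∀ m, v (m + k) = v m := by
    intro m
    have h1 := iter_add g k m w0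
    rw [hc, hvs (k + m)] at h1
    simp only [Option.elim] at h1
    rw [hvs m] at h1
    have : v (k + m) = v m := Option.some_injective _ h1
    rwa [add_comm k m] at this
  have hmod : ∀ m, v m = v (m % k) := by
    intro m
    induction m using Nat.strong_induction_on with
    | _ m ih =>
      by_cases hm : m < k
      · rw [Nat.mod_eq_of_lt hm]
      · have h2 : v m = v (m - k) := by
          have := hper (m - k)
          rw [show m - k + k = m by omega] at this
          exact this
        have h3 : m % k = (m - k) % k := by
          conv_lhs => rw [show m = (m - k) + k by omega]
          exact Nat.add_mod_right _ _
        rw [h2, ih (m - k) (by omega), h3]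
  set S : Finset (Fin n) := (Finset.range k).image v with hSdef
  have hvmem : ∀ m, v m ∈ S := by
    intro m
    rw [hmod m]
    exact Finset.mem_image.mpr ⟨m % k, Finset.mem_range.mpr (Nat.mod_lt _ hk), rfl⟩
  have hw0 : w0 ∈ S := by
    have : v 0 = w0 := Option.some_injective _ (hvs 0).symm
    rw [← this]; exact hvmem 0
  rw [← Matrix.exists_vecMul_eq_zero_iff]
  refine ⟨(fun a => if a ∈ S then (1 : ℤ) else 0), ?_, ?_⟩

  · intro h
    have := congrFun h w0
    rw [if_pos hw0] at this
    simp at this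
  · funext a
    have h1 : Matrix.vecMul (fun a => if a ∈ S then (1 : ℤ) else 0) (NM g) a
        = ∑ w ∈ S, NM g w a := by
      rw [Matrix.vecMul, dotProduct]
      simp only [ite_mul, one_mul, zero_mul]
      rw [Finset.sum_ite_mem, Finset.univ_inter]
    rw [h1]
    simp only [NM_apply]
    rw [Finset.sum_sub_distrib]
    have h2 : (∑ w ∈ S, if a = w then (1 : ℤ) else 0) = if a ∈ S then 1 else 0 :=
      Finset.sum_ite_eq S a (fun _ => (1 : ℤ))
    rw [h2]
    by_cases ha : a ∈ S
    · -- `a = v m`; the unique `w ∈ S` with `g w = some a` is `v (m + (k - 1))`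
      obtain ⟨m, _, hma⟩ := Finset.mem_image.mp ha
      set wa : Fin n := v (m + (k - 1)) with hwa
      have hgwa : g wa = some a := by
        rw [hgv]
        rw [show m + (k - 1) + 1 = m + k by omega, hper, hma]
      have huniq : ∀ w ∈ S, (g w = some a ↔ w = wa) := by
        intro w hw
        obtain ⟨m', _, hm'⟩ := Finset.mem_image.mp hw
        constructor
        · intro hgw
          have hv1 : v (m' + 1) = a := by
            have := hgv m'
            rw [hm', hgw] at this
            exact (Option.some_injective _ this).symm
          have e1 : iter g (k - 1) (v (m' + 1)) = some (v (m' + 1 + (k - 1))) := hshift _ _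
          have e2 : iter g (k - 1) (v m) = some (v (m + (k - 1))) := hshift _ _
          rw [hv1, ← hma] at e1
          rw [e2] at e1
          have : v (m' + 1 + (k - 1)) = wa := (Option.some_injective _ e1).symm
          rw [show m' + 1 + (k - 1) = m' + k by omega, hper, hm'] at this
          exact this
        · rintro rfl
          exact hgwa
      have h3 : (∑ w ∈ S, if g w = some a then (1 : ℤ) else 0)
          = ∑ w ∈ S, if w = wa then (1 : ℤ) else 0 :=
        Finset.sum_congr rfl fun w hw => if_congr (huniq w hw) rfl rfl
      rw [h3, Finset.sum_ite_eq' S wa (fun _ => (1 : ℤ)), if_pos ha,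
        if_pos (hvmem _), Pi.zero_apply, sub_self]
    · have h3 : (∑ w ∈ S, if g w = some a then (1 : ℤ) else 0) = 0 := by
        refine Finset.sum_eq_zero fun w hw => ?_
        obtain ⟨m', _, hm'⟩ := Finset.mem_image.mp hw
        rw [if_neg]
        intro hgw
        rw [← hm', hgv] at hgw
        have : v (m' + 1) = a := Option.some_injective _ hgw
        exact ha (this ▸ hvmem (m' + 1))
      rw [h3, if_neg ha, Pi.zero_apply, sub_self]

section Graph

variable {E : Type} {n : ℕ}

open Classical in
/-- The parent map associated with a choice `r` of one incoming arc per non-root vertex. -/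
noncomputable def par (src : E → Fin (n + 1)) (i : Fin (n + 1)) (r : Fin n → E)
    (w : Fin n) : Option (Fin n) :=
  if h : src (r w) = i then none else some (Fin.exists_succAbove_eq h).choose

lemma par_eq_none_iff {src : E → Fin (n + 1)} {i : Fin (n + 1)} {r : Fin n → E} {w : Fin n} :
    par src i r w = none ↔ src (r w) = i := by
  by_cases h : src (r w) = i <;> simp [par, h]

lemma par_eq_some_iff {src : E → Fin (n + 1)} {i : Fin (n + 1)} {r : Fin n → E} {w z : Fin n} :
    par src i r w = some z ↔ i.succAbove z = src (r w) := by
  by_cases h : src (r w) = i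
  · unfold par
    rw [dif_pos h, h]
    simp only [iff_iff_implies_and_implies]
    refine ⟨fun hz => absurd hz (Option.some_ne_none z).symm, fun hz => absurd hz (Fin.succAbove_ne i z)⟩
  · unfold par
    rw [dif_neg h]
    have hspec := (Fin.exists_succAbove_eq (Ne.intro h)).choose_spec
    constructor
    · intro h2
      rw [← Option.some_injective _ h2]
      exact hspec
    · intro h2
      have : (Fin.exists_succAbove_eq (Ne.intro h)).choose = z :=
        Fin.succAbove_right_injective (by rw [hspec, h2])
      rw [this]

variable {src tgt : E → Fin (n + 1)} {i : Fin (n + 1)}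

open scoped Classical

lemma isOutBranching_of_acyclic {r : Fin n → E}
    (htgt : ∀ w, tgt (r w) = i.succAbove w) (hac : Acyclic (par src i r)) :
    IsOutBranchingAt src tgt (Finset.image r Finset.univ) i := by
  refine ⟨?_, ?_, ?_⟩
  · intro e he
    obtain ⟨w, _, rfl⟩ := Finset.mem_image.mp he
    rw [htgt w]
    exact Fin.succAbove_ne i w
  · intro v hv
    obtain ⟨w, hw⟩ := Fin.exists_succAbove_eq hv
    refine ⟨r w, ⟨Finset.mem_image.mpr ⟨w, Finset.mem_univ w, rfl⟩, by rw [htgt w, hw]⟩, ?_⟩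
    rintro e ⟨he, hte⟩
    obtain ⟨w', _, rfl⟩ := Finset.mem_image.mp he
    have : w' = w := Fin.succAbove_right_injective (by rw [← htgt w', hte, ← hw])
    rw [this]
  · intro v
    by_cases hv : v = i
    · rw [hv]
    obtain ⟨w, hw⟩ := Fin.exists_succAbove_eq hv
    rw [← hw]
    clear hw hv v
    have key : ∀ m (w : Fin n), depth hac w = m →
        Relation.ReflTransGen
          (fun a b => ∃ e ∈ Finset.image r Finset.univ, src e = a ∧ tgt e = b) i
          (i.succAbove w) := by
      intro m
      induction m using Nat.strong_induction_on with
      | _ m ih =>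
        intro w hw
        rcases hp : par src i r w with _ | z
        · exact Relation.ReflTransGen.single
            ⟨r w, Finset.mem_image.mpr ⟨w, Finset.mem_univ w, rfl⟩,
              par_eq_none_iff.mp hp, htgt w⟩
        · have hdz : depth hac z < m := hw ▸ depth_lt hac hp
          exact Relation.ReflTransGen.tail (ih _ hdz z rfl)
            ⟨r w, Finset.mem_image.mpr ⟨w, Finset.mem_univ w, rfl⟩,
              (par_eq_some_iff.mp hp).symm ▸ rfl, htgt w⟩
    exact key _ w rfl

lemma acyclic_of_isOutBranching {B : Finset E} (hB : IsOutBranchingAt src tgt B i)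
    {r : Fin n → E} (hmem : ∀ w, r w ∈ B) (htgt : ∀ w, tgt (r w) = i.succAbove w) :
    Acyclic (par src i r) := by
  obtain ⟨h1, h2, h3⟩ := hB
  have hterm : ∀ v, Relation.ReflTransGen
      (fun a b => ∃ e ∈ B, src e = a ∧ tgt e = b) i v →
      v = i ∨ ∃ w, i.succAbove w = v ∧ ∃ j, iter (par src i r) j w = none := by
    intro v hv
    induction hv with
    | refl => exact Or.inl rfl
    | tail hreach hstep ih =>
      obtain ⟨e, heB, hsrc, htgtb⟩ := hstep
      right
      have hbi : tgt e ≠ i := h1 e heB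
      rw [htgtb] at hbi
      obtain ⟨w, hw⟩ := Fin.exists_succAbove_eq hbi
      refine ⟨w, hw, ?_⟩
      have her : e = r w :=
        (h2 _ hbi).unique ⟨heB, htgtb⟩ ⟨hmem w, by rw [htgt w, hw]⟩
      rcases ih with rfl | ⟨z, hz, j, hj⟩
      · refine ⟨1, ?_⟩
        rw [iter_one]
        exact par_eq_none_iff.mpr (by rw [← her, hsrc])
      · refine ⟨1 + j, ?_⟩
        rw [iter_succ']
        have : par src i r w = some z := par_eq_some_iff.mpr (by rw [← her, hsrc, hz])
        rw [this]
        exact hj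
  intro w k hk hcyc
  have hr := hterm (i.succAbove w) (h3 (i.succAbove w))
  rcases hr with hi | ⟨w', hw', j, hj⟩
  · exact Fin.succAbove_ne i w hi
  · have hww : w' = w := Fin.succAbove_right_injective hw'
    rw [hww] at hj
    have h4 : iter (par src i r) (j * k) w = none :=
      iter_none_mono hj (Nat.le_mul_of_pos_right j hk)
    rw [iter_mul hcyc j] at h4
    exact Option.some_ne_none w h4

open MvPolynomial in
/-- The column vector (as a function) contributed by the arc `e`. -/
noncomputable def uvec (src tgt : E → Fin (n + 1)) (i : Fin (n + 1)) (e : E) (a : Fin n) :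
    MvPolynomial E ℤ :=
  (Int.castRingHom (MvPolynomial E ℤ))
    ((if i.succAbove a = tgt e then 1 else 0) - (if i.succAbove a = src e then 1 else 0))

lemma uvec_eq_one {e : E} {a : Fin n} (hte : tgt e = i.succAbove a) (hl : src e ≠ tgt e) :
    uvec src tgt i e a = 1 := by
  rw [uvec, if_pos hte.symm, if_neg, sub_zero, _root_.map_one]
  intro hsa
  exact hl (by rw [← hsa, hte])

lemma uvec_eq_off {e : E} {a w : Fin n} (htew : tgt e = i.succAbove w) (haw : a ≠ w) :
    uvec src tgt i e a = if src e = i.succAbove a then -1 else 0 := by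
  rw [uvec, if_neg (fun h => haw (Fin.succAbove_right_injective (by rw [h, htew]))), zero_sub]
  by_cases hse : src e = i.succAbove a
  · rw [if_pos hse.symm, if_pos hse, _root_.map_neg, _root_.map_one]
  · rw [if_neg (fun h => hse h.symm), if_neg hse, neg_zero, _root_.map_zero]

open MvPolynomial in
lemma of_uvec_eq_NM {r : Fin n → E} (htgt : ∀ w, tgt (r w) = i.succAbove w) :
    (Matrix.of fun w a => uvec src tgt i (r w) a)
      = (NM (par src i r)).map (Int.castRingHom (MvPolynomial E ℤ)) := by
  refine Matrix.ext fun w a => ?_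
  rw [Matrix.of_apply, Matrix.map_apply, NM_apply, uvec]
  congr 1
  congr 1
  · exact if_congr (by rw [htgt w]; exact Fin.succAbove_right_inj) rfl rfl
  · exact if_congr par_eq_some_iff.symm rfl rfl

end Graph

end MTTaux

open scoped Classical in
/-- The (directed) Matrix Tree Theorem: for a loopless directed multigraph on vertex set
`Fin (n+1)` with arc set `E`, and any vertex `i`, the determinant of the symbolic Kirchhoff
matrix with the `i`-th row and column deleted equals the sum, over all out-branchings `B`
rooted at `i`, of `∏_{e ∈ B} x_e`. -/
theorem stmt_3 (n : ℕ) (E : Type) [Fintype E] (src tgt : E → Fin (n + 1))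
    (hloop : ∀ e : E, src e ≠ tgt e) (i : Fin (n + 1)) :
    Matrix.det
      ((Matrix.of fun a b : Fin (n + 1) =>
          if a = b then
            ∑ e ∈ Finset.univ.filter (fun e : E => tgt e = a), (X e : MvPolynomial E ℤ)
          else
            -∑ e ∈ Finset.univ.filter (fun e : E => src e = a ∧ tgt e = b),
              (X e : MvPolynomial E ℤ)).submatrix i.succAbove i.succAbove)
      = ∑ B : Finset E,
          if IsOutBranchingAt src tgt B i then ∏ e ∈ B, (X e : MvPolynomial E ℤ) else 0 := by
  
  classical
  open MTTaux Matrix in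
  rw [← Matrix.det_transpose]
  have hM : ((Matrix.of fun a b : Fin (n + 1) =>
          if a = b then
            ∑ e ∈ Finset.univ.filter (fun e : E => tgt e = a), (X e : MvPolynomial E ℤ)
          else
            -∑ e ∈ Finset.univ.filter (fun e : E => src e = a ∧ tgt e = b),
              (X e : MvPolynomial E ℤ)).submatrix i.succAbove i.succAbove)ᵀ
      = Matrix.of (fun w => ∑ e ∈ Finset.univ.filter (fun e : E => tgt e = i.succAbove w),
          (X e : MvPolynomial E ℤ) • uvec src tgt i e) := by
    refine Matrix.ext fun w a => ?_
    rw [Matrix.transpose_apply, Matrix.submatrix_apply, Matrix.of_apply, Matrix.of_apply,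
      Finset.sum_apply]
    by_cases haw : a = w
    · subst haw
      rw [if_pos rfl]
      refine (Finset.sum_congr rfl fun e he => ?_).symm
      have hte : tgt e = i.succAbove a := (Finset.mem_filter.mp he).2
      rw [Pi.smul_apply, uvec_eq_one hte (hloop e), smul_eq_mul, mul_one]
    · rw [if_neg fun h => haw (Fin.succAbove_right_injective h)]
      rw [Finset.sum_filter, Finset.sum_filter, ← Finset.sum_neg_distrib]
      refine Finset.sum_congr rfl fun e _ => ?_
      by_cases hte : tgt e = i.succAbove w
      · rw [if_pos hte, Pi.smul_apply, uvec_eq_off hte haw]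
        by_cases hse : src e = i.succAbove a
        · rw [if_pos ⟨hse, hte⟩, if_pos hse, smul_eq_mul, mul_neg_one]
        · rw [if_neg fun h => hse h.1, if_neg hse, smul_eq_mul, mul_zero, neg_zero]
      · rw [if_neg fun h => hte h.2, if_neg hte, neg_zero]
  rw [hM]
  have hdet0 : (Matrix.of (fun w => ∑ e ∈ Finset.univ.filter (fun e : E => tgt e = i.succAbove w),
          (X e : MvPolynomial E ℤ) • uvec src tgt i e)).det
      = (Matrix.detRowAlternating :
          (Fin n → MvPolynomial E ℤ) [⋀^Fin n]→ₗ[MvPolynomial E ℤ] MvPolynomial E ℤ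
          ).toMultilinearMap
        (fun w => ∑ e ∈ Finset.univ.filter (fun e : E => tgt e = i.succAbove w),
          (X e : MvPolynomial E ℤ) • uvec src tgt i e) := rfl
  rw [hdet0, MultilinearMap.map_sum_finset _
    (fun _ e => (X e : MvPolynomial E ℤ) • uvec src tgt i e)
    (fun w => Finset.univ.filter (fun e : E => tgt e = i.succAbove w))]
  have hterm : ∀ r ∈ Fintype.piFinset
      (fun w => Finset.univ.filter (fun e : E => tgt e = i.succAbove w)),
      (Matrix.detRowAlternating :
          (Fin n → MvPolynomial E ℤ) [⋀^Fin n]→ₗ[MvPolynomial E ℤ] MvPolynomial E ℤ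
          ).toMultilinearMap (fun w => (X (r w) : MvPolynomial E ℤ) • uvec src tgt i (r w))
      = if IsOutBranchingAt src tgt (Finset.image r Finset.univ) i
          then ∏ e ∈ Finset.image r Finset.univ, (X e : MvPolynomial E ℤ) else 0 := by
    intro r hr
    have htgt : ∀ w, tgt (r w) = i.succAbove w := fun w =>
      (Finset.mem_filter.mp (Fintype.mem_piFinset.mp hr w)).2
    rw [MultilinearMap.map_smul_univ]
    have hmat : (Matrix.detRowAlternating :
          (Fin n → MvPolynomial E ℤ) [⋀^Fin n]→ₗ[MvPolynomial E ℤ] MvPolynomial E ℤ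
          ).toMultilinearMap (fun w => uvec src tgt i (r w))
        = ((NM (par src i r)).map (Int.castRingHom (MvPolynomial E ℤ))).det := by
      rw [← of_uvec_eq_NM htgt]
      rfl
    rw [hmat, ← RingHom.mapMatrix_apply, ← RingHom.map_det]
    by_cases hob : IsOutBranchingAt src tgt (Finset.image r Finset.univ) i
    · have hac : Acyclic (par src i r) :=
        acyclic_of_isOutBranching hob
          (fun w => Finset.mem_image.mpr ⟨w, Finset.mem_univ w, rfl⟩) htgt
      rw [det_NM_acyclic hac, _root_.map_one, smul_eq_mul, mul_one, if_pos hob]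
      rw [Finset.prod_image (fun w _ w' _ h =>
        Fin.succAbove_right_injective (p := i) (by rw [← htgt w, ← htgt w', h]))]
    · have hnac : ¬ Acyclic (par src i r) := fun hac =>
        hob (isOutBranching_of_acyclic htgt hac)
      unfold Acyclic at hnac
      push_neg at hnac
      obtain ⟨w, k, hk, hcyc⟩ := hnac
      rw [det_NM_cyclic hk hcyc, _root_.map_zero, smul_zero, if_neg hob]
  rw [Finset.sum_congr rfl hterm]
  rw [show (∑ r ∈ Fintype.piFinset
      (fun w => Finset.univ.filter (fun e : E => tgt e = i.succAbove w)),
      if IsOutBranchingAt src tgt (Finset.image r Finset.univ) i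
        then ∏ e ∈ Finset.image r Finset.univ, (X e : MvPolynomial E ℤ) else 0)
      = ∑ r ∈ (Fintype.piFinset
          (fun w => Finset.univ.filter (fun e : E => tgt e = i.succAbove w))).filter
          (fun r => IsOutBranchingAt src tgt (Finset.image r Finset.univ) i),
          ∏ e ∈ Finset.image r Finset.univ, (X e : MvPolynomial E ℤ)
      from (Finset.sum_filter _ _).symm]
  rw [show (∑ B : Finset E,
      if IsOutBranchingAt src tgt B i then ∏ e ∈ B, (X e : MvPolynomial E ℤ) else 0)
      = ∑ B ∈ Finset.univ.filter (fun B : Finset E => IsOutBranchingAt src tgt B i),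
          ∏ e ∈ B, (X e : MvPolynomial E ℤ)
      from (Finset.sum_filter _ _).symm]
  refine Finset.sum_bij' (fun r _ => Finset.image r Finset.univ)
    (fun B hB => fun w =>
      (((Finset.mem_filter.mp hB).2.2.1) (i.succAbove w) (Fin.succAbove_ne i w)).choose)
    ?_ ?_ ?_ ?_ ?_
  · intro r hr
    exact Finset.mem_filter.mpr ⟨Finset.mem_univ _, (Finset.mem_filter.mp hr).2⟩
  · intro B hB
    have hOB := (Finset.mem_filter.mp hB).2
    have hspec := fun w =>
      (hOB.2.1 (i.succAbove w) (Fin.succAbove_ne i w)).choose_spec.1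
    have himg : Finset.image (fun w =>
        ((Finset.mem_filter.mp hB).2.2.1 (i.succAbove w) (Fin.succAbove_ne i w)).choose)
        Finset.univ = B := by
      apply Finset.Subset.antisymm
      · intro e he
        obtain ⟨w, _, rfl⟩ := Finset.mem_image.mp he
        exact (hspec w).1
      · intro e he
        have hti : tgt e ≠ i := hOB.1 e he
        obtain ⟨w, hw⟩ := Fin.exists_succAbove_eq hti
        refine Finset.mem_image.mpr ⟨w, Finset.mem_univ w, ?_⟩
        exact ((hOB.2.1 (i.succAbove w) (Fin.succAbove_ne i w)).unique ⟨he, hw.symm⟩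
          (hspec w)).symm
    refine Finset.mem_filter.mpr ⟨?_, ?_⟩
    · exact Fintype.mem_piFinset.mpr fun w =>
        Finset.mem_filter.mpr ⟨Finset.mem_univ _, (hspec w).2⟩
    · rw [himg]
      exact hOB
  · intro r hr
    funext w
    have hob : IsOutBranchingAt src tgt (Finset.image r Finset.univ) i :=
      (Finset.mem_filter.mp hr).2
    have htgt : ∀ w, tgt (r w) = i.succAbove w := fun w =>
      (Finset.mem_filter.mp
        (Fintype.mem_piFinset.mp (Finset.mem_filter.mp hr).1 w)).2
    exact ((hob.2.1 (i.succAbove w) (Fin.succAbove_ne i w)).unique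
      ((Finset.mem_filter.mp (Finset.mem_filter.mpr ⟨Finset.mem_univ _,
        hob⟩)).2.2.1 (i.succAbove w) (Fin.succAbove_ne i w)).choose_spec.1
      ⟨Finset.mem_image.mpr ⟨w, Finset.mem_univ w, rfl⟩, htgt w⟩)
  · intro B hB
    have hOB := (Finset.mem_filter.mp hB).2
    apply Finset.Subset.antisymm
    · intro e he
      obtain ⟨w, _, rfl⟩ := Finset.mem_image.mp he
      exact (((Finset.mem_filter.mp hB).2.2.1 (i.succAbove w)
        (Fin.succAbove_ne i w)).choose_spec.1).1
    · intro e he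
      have hti : tgt e ≠ i := hOB.1 e he
      obtain ⟨w, hw⟩ := Fin.exists_succAbove_eq hti
      refine Finset.mem_image.mpr ⟨w, Finset.mem_univ w, ?_⟩
      exact (((Finset.mem_filter.mp hB).2.2.1 (i.succAbove w)
        (Fin.succAbove_ne i w)).unique ⟨he, hw.symm⟩
        (((Finset.mem_filter.mp hB).2.2.1 (i.succAbove w)
          (Fin.succAbove_ne i w)).choose_spec.1)).symm
  · intro r hr
    rfl
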